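/- Let C be a nonempty subset of a Euclidean space X, L an affine subspace containing C, w ∈ C, ε ∈ [0, 1), δ > 0, and λ ∈ (0, 2]. Suppose C is closed and (ε, δ)-regular at w. Set Ω := C ∩ B(w, δ), γ := 1 + λε/(1 − ε), β := (2 − λ)/λ. Then P_C^λ is (Ω + (L − L)^⊥, γ, β)-quasi firmly Fejér monotone on B(w, δ/2) ∩ L, i.e., for all x ∈ B(w, δ/2) ∩ L, x₊ ∈ P_C^λ x, x̄ ∈ Ω + (L − L)^⊥: ‖x₊ − x̄‖² + β‖x − x₊‖² ≤ γ‖x − x̄‖². -/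

import Mathlib

open Pointwise

/-- The set-valued metric projector onto a set `C`. -/
def projSet {X : Type*} [NormedAddCommGroup X] [InnerProductSpace ℝ X]
    (C : Set X) (x : X) : Set X :=
  {c ∈ C | dist x c = Metric.infDist x C}

/-- The proximal normal cone to `C` at `x`. -/
def proxNormalCone {X : Type*} [NormedAddCommGroup X] [InnerProductSpace ℝ X]
    (C : Set X) (x : X) : Set X :=
  {u | ∃ z : X, ∃ t : ℝ, 0 ≤ t ∧ x ∈ projSet C z ∧ u = t • (z - x)}

/-- `C` is `(ε, δ)`-regular at `w`. -/
def EpsDeltaRegular {X : Type*} [NormedAddCommGroup X] [InnerProductSpace ℝ X]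
    (C : Set X) (w : X) (eps delta : ℝ) : Prop :=
  ∀ x ∈ C ∩ Metric.closedBall w delta, ∀ y ∈ C ∩ Metric.closedBall w delta,
    ∀ u ∈ proxNormalCone C x,
      inner ℝ u (x - y) ≥ -eps * ‖u‖ * ‖x - y‖ 

theorem gDR_rproj_qffm {X : Type*} [NormedAddCommGroup X] [InnerProductSpace ℝ X]
    [FiniteDimensional ℝ X]
    (C : Set X) (hCne : C.Nonempty) (hCcl : IsClosed C)
    (L : AffineSubspace ℝ X) [Nonempty L] (hCL : C ⊆ (L : Set X))
    (w : X) (hw : w ∈ C)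
    (eps delta lam : ℝ) (heps0 : 0 ≤ eps) (heps1 : eps < 1) (hdelta : 0 < delta)
    (hlam0 : 0 < lam) (hlam2 : lam ≤ 2)
    (hreg : EpsDeltaRegular C w eps delta) :
    ∀ x ∈ Metric.closedBall w (delta / 2) ∩ (L : Set X),
      ∀ xp ∈ (fun c => (1 - lam) • x + lam • c) '' projSet C x,
        ∀ xb ∈ (C ∩ Metric.closedBall w delta) + (L.directionᗮ : Set X),
          ‖xp - xb‖ ^ 2 + ((2 - lam) / lam) * ‖x - xp‖ ^ 2 ≤
            (1 + lam * eps / (1 - eps)) * ‖x - xb‖ ^ 2 := by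
  rintro x ⟨hxball, hxL⟩ xp ⟨p, hp, rfl⟩ xb hxb
  rw [Set.mem_add] at hxb
  obtain ⟨c, ⟨hcC, hcball⟩, v, hv, rfl⟩ := hxb
  obtain ⟨hpC, hpdist⟩ := hp
  have heps1' : 0 < 1 - eps := by linarith
  have hxw : dist x w ≤ delta / 2 := Metric.mem_closedBall.mp hxball
  have hxp_le : dist x p ≤ delta / 2 := by
    rw [hpdist]
    exact le_trans (Metric.infDist_le_dist_of_mem hw) hxw
  have hpw : p ∈ Metric.closedBall w delta := by
    rw [Metric.mem_closedBall]
    calc dist p w ≤ dist p x + dist x w := dist_triangle _ _ _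
      _ ≤ delta / 2 + delta / 2 := by
          rw [dist_comm]; exact add_le_add hxp_le hxw
      _ = delta := by ring
  have hu_cone : x - p ∈ proxNormalCone C p :=
    ⟨x, 1, zero_le_one, ⟨hpC, hpdist⟩, (one_smul ℝ _).symm⟩
  have hs : (inner ℝ (x - p) (p - c) : ℝ) ≥ -eps * ‖x - p‖ * ‖p - c‖ :=
    hreg p ⟨hpC, hpw⟩ c ⟨hcC, hcball⟩ (x - p) hu_cone
  -- orthogonality of v to differences of points of L
  have hvinner : ∀ y ∈ C, (inner ℝ (x - y) v : ℝ) = 0 := fun y hy =>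
    (Submodule.mem_orthogonal L.direction v).mp hv _
      (AffineSubspace.vsub_mem_direction hxL (hCL hy))
  have hvc : (inner ℝ (x - c) v : ℝ) = 0 := hvinner c hcC
  have hvp : (inner ℝ v (x - p) : ℝ) = 0 := by
    rw [real_inner_comm]; exact hvinner p hpC
  -- scalar abbreviations
  have hsmulsq : ∀ z : X, ‖lam • z‖ ^ 2 = lam ^ 2 * ‖z‖ ^ 2 := by
    intro z
    rw [norm_smul, mul_pow, Real.norm_eq_abs, sq_abs]
  -- expansion of ‖x - xb‖²
  have exp1 : ‖x - (c + v)‖ ^ 2 =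
      ‖x - p‖ ^ 2 + 2 * (inner ℝ (x - p) (p - c) : ℝ) + ‖p - c‖ ^ 2 + ‖v‖ ^ 2 := by
    have h1 : x - (c + v) = ((x - p) + (p - c)) - v := by abel
    have h2 : (x - p) + (p - c) = x - c := by abel
    rw [h1, norm_sub_sq_real, norm_add_sq_real, h2, hvc]
    ring
  -- inner product of x - xb with x - p
  have hinner : (inner ℝ (x - (c + v)) (x - p) : ℝ)
      = ‖x - p‖ ^ 2 + (inner ℝ (x - p) (p - c) : ℝ) := by
    have h1 : x - (c + v) = ((x - p) + (p - c)) - v := by abel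
    rw [h1, inner_sub_left, inner_add_left, real_inner_self_eq_norm_sq, hvp,
      real_inner_comm (p - c)]
    ring
  -- expansion of ‖xp - xb‖²
  have exp2 : ‖(1 - lam) • x + lam • p - (c + v)‖ ^ 2 =
      ‖x - (c + v)‖ ^ 2
        - 2 * lam * (‖x - p‖ ^ 2 + (inner ℝ (x - p) (p - c) : ℝ))
        + lam ^ 2 * ‖x - p‖ ^ 2 := by
    have h1 : (1 - lam) • x + lam • p - (c + v) = (x - (c + v)) - lam • (x - p) := by
      rw [sub_smul, smul_sub, one_smul]; abel
    rw [h1, norm_sub_sq_real, inner_smul_right, hsmulsq, hinner]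
    ring
  -- expansion of ‖x - xp‖²
  have exp3 : ‖x - ((1 - lam) • x + lam • p)‖ ^ 2 = lam ^ 2 * ‖x - p‖ ^ 2 := by
    have h1 : x - ((1 - lam) • x + lam • p) = lam • (x - p) := by
      rw [sub_smul, smul_sub, one_smul]; abel
    rw [h1, hsmulsq]
  rw [exp1] at exp2
  rw [exp2, exp3, exp1]
  have hBq : (2 - lam) / lam * (lam ^ 2 * ‖x - p‖ ^ 2)
      = (2 - lam) * lam * ‖x - p‖ ^ 2 := by
    field_simp
  rw [hBq]
  -- key inequality
  have key : -(2 * lam * (inner ℝ (x - p) (p - c) : ℝ)) ≤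
      lam * eps / (1 - eps) *
        (‖x - p‖ ^ 2 + 2 * (inner ℝ (x - p) (p - c) : ℝ) + ‖p - c‖ ^ 2 + ‖v‖ ^ 2) := by
    rw [div_mul_eq_mul_div, le_div_iff₀ heps1']
    nlinarith [mul_nonneg (mul_nonneg hlam0.le heps0) (sq_nonneg (‖x - p‖ - ‖p - c‖)),
      mul_nonneg (mul_nonneg hlam0.le heps0) (sq_nonneg ‖v‖),
      mul_le_mul_of_nonneg_left hs hlam0.le]
  nlinarith [key]
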